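/- For every positive integer n, the set SReg(ORCP_n) of strongly regular elements of ORCP_n is a regular subsemigroup of ORCP_n: it is closed under composition (if α and β are strongly regular then so is αβ), and every α ∈ SReg(ORCP_n) admits β ∈ SReg(ORCP_n) with αβα = α. -/

import Mathlib

/-- A partial transformation of the chain `[n] = {1,…,n}`, encoded as a map
`ℕ → Option ℕ`: `α x = some y` means `x ∈ dom α` and `xα = y`. -/
def IsPT (n : ℕ) (α : ℕ → Option ℕ) : Prop :=
  ∀ x y, α x = some y → x ∈ Set.Icc 1 n ∧ y ∈ Set.Icc 1 n

/-- Composition of partial transformations: apply `α` first, then `β`. -/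
def pcomp (α β : ℕ → Option ℕ) : ℕ → Option ℕ := fun x => (α x).bind β

/-- `α` is a contraction: `|xα − yα| ≤ |x − y|` on its domain. -/
def IsContraction (α : ℕ → Option ℕ) : Prop :=
  ∀ x y a b, α x = some a → α y = some b → Nat.dist a b ≤ Nat.dist x y

def IsOrderPreserving (α : ℕ → Option ℕ) : Prop :=
  ∀ x y a b, α x = some a → α y = some b → x ≤ y → a ≤ b

def IsOrderReversing (α : ℕ → Option ℕ) : Prop :=
  ∀ x y a b, α x = some a → α y = some b → x ≤ y → b ≤ a

/-- `CP n`: the partial contractions of `[n]`. -/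
def CP (n : ℕ) (α : ℕ → Option ℕ) : Prop := IsPT n α ∧ IsContraction α

/-- `OCP n`: the order preserving partial contractions of `[n]`. -/
def OCP (n : ℕ) (α : ℕ → Option ℕ) : Prop := CP n α ∧ IsOrderPreserving α

/-- `ORCP n`: the order preserving or order reversing partial contractions of `[n]`. -/
def ORCP (n : ℕ) (α : ℕ → Option ℕ) : Prop :=
  CP n α ∧ (IsOrderPreserving α ∨ IsOrderReversing α)

/-- The image of a partial transformation. -/
def img (α : ℕ → Option ℕ) : Set ℕ := {y | ∃ x, α x = some y}

/-- The kernel of a partial transformation: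
`{(x,y) ∈ dom α × dom α : xα = yα}`. -/
def pker (α : ℕ → Option ℕ) : Set (ℕ × ℕ) :=
  {p | α p.1 ≠ none ∧ α p.1 = α p.2}

/-- The starred Green's relation `L*` relative to the class `S`:
`α L* β` iff for all `γ, δ ∈ S`, `αγ = αδ ⟺ βγ = βδ`. -/
def LStar (S : (ℕ → Option ℕ) → Prop) (α β : ℕ → Option ℕ) : Prop :=
  ∀ γ δ, S γ → S δ → (pcomp α γ = pcomp α δ ↔ pcomp β γ = pcomp β δ)

/-- The starred Green's relation `R*` relative to the class `S`:
`α R* β` iff for all `γ, δ ∈ S`, `γα = δα ⟺ γβ = δβ`. -/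
def RStar (S : (ℕ → Option ℕ) → Prop) (α β : ℕ → Option ℕ) : Prop :=
  ∀ γ δ, S γ → S δ → (pcomp γ α = pcomp δ α ↔ pcomp γ β = pcomp δ β)

/-- `α` is a regular element of the class `S`: there is `β ∈ S` with `αβα = α`. -/
def RegularIn (S : (ℕ → Option ℕ) → Prop) (α : ℕ → Option ℕ) : Prop :=
  ∃ β, S β ∧ pcomp (pcomp α β) α = α

/-- `T` is a transversal of the kernel partition `Ker α`: a subset of `dom α`
containing exactly one element of each kernel class. -/
def IsTransversal (α : ℕ → Option ℕ) (T : Set ℕ) : Prop :=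
  (∀ t ∈ T, α t ≠ none) ∧ ∀ v ∈ img α, ∃! t, t ∈ T ∧ α t = some v

/-- `T` is a convex subset of `[n]`. -/
def ConvexIn (n : ℕ) (T : Set ℕ) : Prop :=
  ∀ x ∈ T, ∀ y ∈ T, ∀ z ∈ Set.Icc 1 n, x ≤ z → z ≤ y → z ∈ T

/-- A strongly regular element of `ORCP n`: a regular element whose kernel
partition admits a convex transversal. -/
def StronglyRegular (n : ℕ) (α : ℕ → Option ℕ) : Prop :=
  ORCP n α ∧ RegularIn (ORCP n) α ∧ ∃ T : Set ℕ, IsTransversal α T ∧ ConvexIn n T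

section Helpers

variable {n : ℕ} {α β : ℕ → Option ℕ} {S T : Set ℕ}

lemma dom_subset (hpt : IsPT n α) (hT : IsTransversal α T) :
    T ⊆ Set.Icc 1 n := by
  intro t ht
  have h1 := hT.1 t ht
  cases hat : α t with
  | none => exact absurd hat h1
  | some v => exact (hpt t v hat).1

lemma trans_uniq (hT : IsTransversal α T) {t t' v : ℕ}
    (ht : t ∈ T) (ht' : t' ∈ T) (h1 : α t = some v) (h2 : α t' = some v) : t = t' := by
  obtain ⟨u, _, hu2⟩ := hT.2 v ⟨t, h1⟩
  rw [hu2 t ⟨ht, h1⟩, hu2 t' ⟨ht', h2⟩]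

lemma trans_exists (hT : IsTransversal α T) {x v : ℕ} (hx : α x = some v) :
    ∃ t ∈ T, α t = some v := by
  obtain ⟨u, ⟨hu1, hu2⟩, _⟩ := hT.2 v ⟨x, hx⟩
  exact ⟨u, hu1, hu2⟩

lemma affine_pres (hα : ORCP n α) (hp : IsOrderPreserving α)
    (hT : IsTransversal α T) (hTc : ConvexIn n T) :
    ∀ d t v, t ∈ T → t + d ∈ T → α t = some v → α (t + d) = some (v + d) := by
  intro d
  induction d with
  | zero => intro t v ht _ hv; simpa using hv
  | succ d ih =>
    intro t v ht htd hv
    have hTn : T ⊆ Set.Icc 1 n := dom_subset hα.1.1 hT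
    have htd' : t + d ∈ T := by
      refine hTc t ht (t + d + 1) htd (t + d) ?_ (by omega) (by omega)
      have h1 := (hTn ht).1
      have h2 := (hTn htd).2
      simp only [Set.mem_Icc]; omega
    have h1 : α (t + d) = some (v + d) := ih t v ht htd' hv
    cases h2 : α (t + d + 1) with
    | none => exact absurd h2 (hT.1 _ htd)
    | some u =>
      have hc := hα.1.2 (t + d) (t + d + 1) (v + d) u h1 h2
      have hle : v + d ≤ u := hp (t + d) (t + d + 1) (v + d) u h1 h2 (by omega)
      have hne : u ≠ v + d := by
        intro he
        have : t + d = t + (d + 1) :=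
          trans_uniq hT htd' htd h1 (show α (t + (d+1)) = some _ from by
            have h2' : α (t + (d + 1)) = some u := h2
            rw [h2', he])
        omega
      have hu : u = v + (d + 1) := by simp [Nat.dist] at hc; omega
      have h2' : α (t + (d + 1)) = some u := h2
      rw [hu]

lemma affine_rev (hα : ORCP n α) (hr : IsOrderReversing α)
    (hT : IsTransversal α T) (hTc : ConvexIn n T) :
    ∀ d t v, t ∈ T → t + d ∈ T → α t = some v → α (t + d) = some (v - d) ∧ d < v := by
  intro d
  induction d with
  | zero =>
    intro t v ht _ hv
    have := (hα.1.1 t v hv).2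
    simp only [Set.mem_Icc] at this
    exact ⟨by simpa using hv, by omega⟩
  | succ d ih =>
    intro t v ht htd hv
    have hTn : T ⊆ Set.Icc 1 n := dom_subset hα.1.1 hT
    have htd' : t + d ∈ T := by
      refine hTc t ht (t + d + 1) htd (t + d) ?_ (by omega) (by omega)
      have h1 := (hTn ht).1
      have h2 := (hTn htd).2
      simp only [Set.mem_Icc]; omega
    obtain ⟨h1, hdv⟩ := ih t v ht htd' hv
    cases h2 : α (t + d + 1) with
    | none => exact absurd h2 (hT.1 _ htd)
    | some u =>
      have hc := hα.1.2 (t + d) (t + d + 1) (v - d) u h1 h2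
      have hle : u ≤ v - d := hr (t + d) (t + d + 1) (v - d) u h1 h2 (by omega)
      have hu1 : 1 ≤ u := by
        have := (hα.1.1 (t + d + 1) u h2).2
        simp only [Set.mem_Icc] at this; exact this.1
      have hne : u ≠ v - d := by
        intro he
        have : t + d = t + (d + 1) :=
          trans_uniq hT htd' htd h1 (show α (t + (d+1)) = some _ from by
            have h2' : α (t + (d + 1)) = some u := h2
            rw [h2', he])
        omega
      have hu : u = v - (d + 1) ∧ d + 1 < v := by
        simp [Nat.dist] at hc; omega
      constructor
      · have h2' : α (t + (d + 1)) = some u := h2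
        rw [hu.1]
      · exact hu.2

lemma isom (hα : ORCP n α) (hT : IsTransversal α T) (hTc : ConvexIn n T) :
    ∀ t t' v v', t ∈ T → t' ∈ T → α t = some v → α t' = some v' →
      Nat.dist v v' = Nat.dist t t' := by
  have key : ∀ t t' v v', t ∈ T → t' ∈ T → α t = some v → α t' = some v' →
      t ≤ t' → Nat.dist v v' = Nat.dist t t' := by
    intro t t' v v' ht ht' hv hv' hle
    obtain ⟨d, rfl⟩ : ∃ d, t' = t + d := ⟨t' - t, by omega⟩
    rcases hα.2 with hp | hr
    · have := affine_pres hα hp hT hTc d t v ht ht' hv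
      rw [hv'] at this
      have : v' = v + d := by simpa using this
      subst this; simp [Nat.dist]
    · obtain ⟨h1, h2⟩ := affine_rev hα hr hT hTc d t v ht ht' hv
      rw [hv'] at h1
      have : v' = v - d := by simpa using h1
      subst this; simp [Nat.dist]; omega
  intro t t' v v' ht ht' hv hv'
  rcases le_total t t' with h | h
  · exact key t t' v v' ht ht' hv hv' h
  · rw [Nat.dist_comm v v', Nat.dist_comm t t']
    exact key t' t v' v ht' ht hv' hv h

lemma img_convex (hα : ORCP n α) (hT : IsTransversal α T) (hTc : ConvexIn n T) :
    ConvexIn n (img α) := by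
  rintro v ⟨x, hx⟩ v' ⟨x', hx'⟩ z hz hvz hzv'
  have hTn : T ⊆ Set.Icc 1 n := dom_subset hα.1.1 hT
  obtain ⟨t, ht, htv⟩ := trans_exists hT hx
  obtain ⟨t', ht', htv'⟩ := trans_exists hT hx'
  rcases hα.2 with hp | hr
  · rcases le_total t t' with h | h
    · obtain ⟨d, rfl⟩ : ∃ d, t' = t + d := ⟨t' - t, by omega⟩
      have haff := affine_pres hα hp hT hTc d t v ht ht' htv
      have hv' : v' = v + d := by rw [htv'] at haff; simpa using haff
      set e := z - v with he
      have hed : e ≤ d := by omega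
      have hte : t + e ∈ T := by
        refine hTc t ht (t + d) ht' (t + e) ?_ (by omega) (by omega)
        have h1 := (hTn ht).1
        have h2 := (hTn ht').2
        simp only [Set.mem_Icc]; omega
      refine ⟨t + e, ?_⟩
      rw [affine_pres hα hp hT hTc e t v ht hte htv]
      congr 1; omega
    · have : v' ≤ v := hp t' t v' v htv' htv h
      have : z = v' := by omega
      exact this ▸ ⟨x', hx'⟩
  · rcases le_total t t' with h | h
    · have : v' ≤ v := hr t t' v v' htv htv' h
      have : z = v' := by omega
      exact this ▸ ⟨x', hx'⟩
    · obtain ⟨d, rfl⟩ : ∃ d, t = t' + d := ⟨t - t', by omega⟩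
      obtain ⟨haff, hdv⟩ := affine_rev hα hr hT hTc d t' v' ht' ht htv'
      have hv : v = v' - d := by rw [htv] at haff; simpa using haff
      set e := v' - z with he
      have hed : e ≤ d := by omega
      have hte : t' + e ∈ T := by
        refine hTc t' ht' (t' + d) ht (t' + e) ?_ (by omega) (by omega)
        have h1 := (hTn ht').1
        have h2 := (hTn ht).2
        simp only [Set.mem_Icc]; omega
      refine ⟨t' + e, ?_⟩
      rw [(affine_rev hα hr hT hTc e t' v' ht' hte htv').1]
      congr 1; omega

lemma blocks (hα : ORCP n α) {x y x' y' v w : ℕ}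
    (hx : α x = some v) (hy : α y = some w) (hvw : v ≠ w) (hxy : x ≤ y)
    (hx' : α x' = some v) (hy' : α y' = some w) : x' < y' := by
  rcases le_or_gt y' x' with h | h
  · rcases hα.2 with hp | hr
    · have h1 := hp x y v w hx hy hxy
      have h2 := hp y' x' w v hy' hx' h
      exact absurd (le_antisymm h1 h2) hvw
    · have h1 := hr x y v w hx hy hxy
      have h2 := hr y' x' w v hy' hx' h
      exact absurd (le_antisymm h2 h1) hvw
  · exact h

end Helpers
open scoped Classical in
noncomputable def pinv (α : ℕ → Option ℕ) (U : Set ℕ) : ℕ → Option ℕ :=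
  fun v => if h : ∃ u, u ∈ U ∧ α u = some v then some h.choose else none

section Inverse

variable {n : ℕ} {α β : ℕ → Option ℕ} {U : Set ℕ}

lemma pinv_eq_some (hU : IsTransversal α U) {v u : ℕ} :
    pinv α U v = some u ↔ u ∈ U ∧ α u = some v := by
  constructor
  · intro h
    unfold pinv at h
    split at h
    case isTrue hex =>
      obtain ⟨h1, h2⟩ := hex.choose_spec
      cases h
      exact ⟨h1, h2⟩
    case isFalse => simp at h
  · rintro ⟨hu, hau⟩
    have hex : ∃ u, u ∈ U ∧ α u = some v := ⟨u, hu, hau⟩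
    unfold pinv
    rw [dif_pos hex]
    have hspec := hex.choose_spec
    exact congrArg some (trans_uniq hU hspec.1 hu hspec.2 hau)

lemma inverse_lemma (hα : ORCP n α) (hU : IsTransversal α U) (hUc : ConvexIn n U) :
    StronglyRegular n (pinv α U) ∧ pcomp (pcomp α (pinv α U)) α = α := by
  set δ := pinv α U with hδ
  have hspec : ∀ {v u : ℕ}, δ v = some u ↔ u ∈ U ∧ α u = some v := pinv_eq_some hU
  -- IsPT
  have hPT : IsPT n δ := by
    intro v u h
    obtain ⟨hu, hau⟩ := hspec.1 h
    exact ⟨(hα.1.1 u v hau).2, (hα.1.1 u v hau).1⟩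
  -- contraction
  have hC : IsContraction δ := by
    intro v v' u u' h h'
    obtain ⟨hu, hau⟩ := hspec.1 h
    obtain ⟨hu', hau'⟩ := hspec.1 h'
    rw [← isom hα hU hUc u u' v v' hu hu' hau hau']
  -- monotone
  have hM : IsOrderPreserving δ ∨ IsOrderReversing δ := by
    rcases hα.2 with hp | hr
    · left
      intro v v' u u' h h' hle
      obtain ⟨hu, hau⟩ := hspec.1 h
      obtain ⟨hu', hau'⟩ := hspec.1 h'
      by_contra hlt
      push_neg at hlt
      have h1 : v' ≤ v := hp u' u v' v hau' hau (by omega)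
      have h2 : v = v' := by omega
      subst h2
      exact absurd (trans_uniq hU hu hu' hau hau') (by omega)
    · right
      intro v v' u u' h h' hle
      obtain ⟨hu, hau⟩ := hspec.1 h
      obtain ⟨hu', hau'⟩ := hspec.1 h'
      by_contra hlt
      push_neg at hlt
      have h1 : v' ≤ v := hr u u' v v' hau hau' (by omega)
      have h2 : v = v' := by omega
      subst h2
      exact absurd (trans_uniq hU hu hu' hau hau') (by omega)
  have hORCP : ORCP n δ := ⟨⟨hPT, hC⟩, hM⟩
  -- α δ α = α
  have hada : pcomp (pcomp α δ) α = α := by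
    funext x
    cases hax : α x with
    | none => simp [pcomp, hax]
    | some v =>
      obtain ⟨u, hu, hau⟩ := trans_exists hU hax
      have hd : δ v = some u := hspec.2 ⟨hu, hau⟩
      simp [pcomp, hax, hd, hau]
  -- δ α δ = δ
  have hdad : pcomp (pcomp δ α) δ = δ := by
    funext v
    cases hdv : δ v with
    | none => simp [pcomp, hdv]
    | some u =>
      obtain ⟨hu, hau⟩ := hspec.1 hdv
      simp [pcomp, hdv, hau]
  -- transversal of δ
  have hTδ : IsTransversal δ (img α) := by
    constructor
    · rintro v ⟨x, hx⟩
      obtain ⟨u, hu, hau⟩ := trans_exists hU hx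
      rw [hspec.2 ⟨hu, hau⟩]
      simp
    · rintro u ⟨v₀, hv₀⟩
      obtain ⟨hu, hau⟩ := hspec.1 hv₀
      refine ⟨v₀, ⟨⟨u, hau⟩, hv₀⟩, ?_⟩
      rintro v ⟨_, hv⟩
      obtain ⟨_, hau'⟩ := hspec.1 hv
      rw [hau'] at hau
      exact (Option.some.injEq _ _ ▸ hau)
  exact ⟨⟨hORCP, ⟨α, hα, hdad⟩, img α, hTδ, img_convex hα hU hUc⟩, hada⟩

end Inverse

lemma orcp_comp {n : ℕ} {α β : ℕ → Option ℕ} (hα : ORCP n α) (hβ : ORCP n β) :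
    ORCP n (pcomp α β) := by
  have hmem : ∀ x y, pcomp α β x = some y → ∃ v, α x = some v ∧ β v = some y := by
    intro x y h
    simpa [pcomp, Option.bind_eq_some_iff] using h
  refine ⟨⟨?_, ?_⟩, ?_⟩
  · intro x y h
    obtain ⟨v, h1, h2⟩ := hmem x y h
    exact ⟨(hα.1.1 x v h1).1, (hβ.1.1 v y h2).2⟩
  · intro x y a b ha hb
    obtain ⟨v, h1, h2⟩ := hmem x a ha
    obtain ⟨w, h3, h4⟩ := hmem y b hb
    exact le_trans (hβ.1.2 v w a b h2 h4) (hα.1.2 x y v w h1 h3)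
  · rcases hα.2 with hp | hr <;> rcases hβ.2 with hq | hs
    · left
      intro x y a b ha hb hxy
      obtain ⟨v, h1, h2⟩ := hmem x a ha
      obtain ⟨w, h3, h4⟩ := hmem y b hb
      exact hq v w a b h2 h4 (hp x y v w h1 h3 hxy)
    · right
      intro x y a b ha hb hxy
      obtain ⟨v, h1, h2⟩ := hmem x a ha
      obtain ⟨w, h3, h4⟩ := hmem y b hb
      exact hs v w a b h2 h4 (hp x y v w h1 h3 hxy)
    · right
      intro x y a b ha hb hxy
      obtain ⟨v, h1, h2⟩ := hmem x a ha
      obtain ⟨w, h3, h4⟩ := hmem y b hb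
      exact hq w v b a h4 h2 (hr x y v w h1 h3 hxy)
    · left
      intro x y a b ha hb hxy
      obtain ⟨v, h1, h2⟩ := hmem x a ha
      obtain ⟨w, h3, h4⟩ := hmem y b hb
      exact hs w v b a h4 h2 (hr x y v w h1 h3 hxy)
lemma comp_transversal {n : ℕ} {α β : ℕ → Option ℕ} {S T : Set ℕ}
    (hα : ORCP n α) (hβ : ORCP n β)
    (hS : IsTransversal α S) (hSc : ConvexIn n S)
    (hT : IsTransversal β T) (hTc : ConvexIn n T) :
    ∃ U, IsTransversal (pcomp α β) U ∧ ConvexIn n U := by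
  set I := img α with hIdef
  have hIc : ConvexIn n I := img_convex hα hS hSc
  have hIn : ∀ z ∈ I, z ∈ Set.Icc 1 n := by
    rintro z ⟨x, hx⟩; exact (hα.1.1 x z hx).2
  have hTn : T ⊆ Set.Icc 1 n := dom_subset hβ.1.1 hT
  have key : ∃ T₁ : Set ℕ,
      (∀ t ∈ T₁, t ∈ I) ∧ (∀ t ∈ T₁, ∃ w, β t = some w) ∧ ConvexIn n T₁ ∧
      (∀ z w, z ∈ I → β z = some w → ∃ t ∈ T₁, β t = some w) ∧
      (∀ t t' w, t ∈ T₁ → t' ∈ T₁ → β t = some w → β t' = some w → t = t') := by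
    by_cases hcase : ∃ t t' w w', t ∈ T ∧ t' ∈ T ∧ w ≠ w' ∧ β t = some w ∧ β t' = some w'
        ∧ (∃ z ∈ I, β z = some w) ∧ (∃ z' ∈ I, β z' = some w')
    · obtain ⟨t₁, t₂, w₁, w₂, ht₁, ht₂, hw12, hbt₁, hbt₂, ⟨z₁, hz₁I, hbz₁⟩,
        ⟨z₂, hz₂I, hbz₂⟩⟩ := hcase
      have memI : ∀ t ∈ T, ∀ z w, z ∈ I → β z = some w → β t = some w → t ∈ I := by
        intro t ht z w hzI hbz hbt
        obtain ⟨t', w', z', ht', hww', hbt', hz'I, hbz'⟩ :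
            ∃ t' w' z', t' ∈ T ∧ w ≠ w' ∧ β t' = some w' ∧ z' ∈ I ∧ β z' = some w' := by
          by_cases h : w = w₁
          · exact ⟨t₂, w₂, z₂, ht₂, h ▸ hw12, hbt₂, hz₂I, hbz₂⟩
          · exact ⟨t₁, w₁, z₁, ht₁, h, hbt₁, hz₁I, hbz₁⟩
        have hbnd := hTn ht
        have hbnd' := hTn ht'
        simp only [Set.mem_Icc] at hbnd hbnd'
        have htne : t ≠ t' := by
          rintro rfl
          rw [hbt] at hbt'
          exact hww' (Option.some.inj hbt')
        rcases Ne.lt_or_gt htne with hlt | hgt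
        · have ht1 : t + 1 ∈ T := by
            refine hTc t ht t' ht' (t + 1) ?_ (by omega) (by omega)
            simp only [Set.mem_Icc]; omega
          obtain ⟨u, hu⟩ : ∃ u, β (t + 1) = some u := by
            cases h : β (t + 1) with
            | none => exact absurd h (hT.1 _ ht1)
            | some u => exact ⟨u, rfl⟩
          have hune : w ≠ u := by
            intro he
            have := trans_uniq hT ht ht1 hbt (he ▸ hu)
            omega
          have h1 : z ≤ t := by
            have := blocks hβ hbt hu hune (by omega) hbz hu
            omega
          have h2 : t < z' := blocks hβ hbt hbt' hww' (le_of_lt hlt) hbt hbz'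
          exact hIc z hzI z' hz'I t (hTn ht) h1 (le_of_lt h2)
        · have ht1 : t - 1 ∈ T := by
            refine hTc t' ht' t ht (t - 1) ?_ (by omega) (by omega)
            simp only [Set.mem_Icc]; omega
          obtain ⟨u, hu⟩ : ∃ u, β (t - 1) = some u := by
            cases h : β (t - 1) with
            | none => exact absurd h (hT.1 _ ht1)
            | some u => exact ⟨u, rfl⟩
          have hune : u ≠ w := by
            intro he
            have := trans_uniq hT ht1 ht (he ▸ hu) hbt
            omega
          have h1 : t ≤ z := by
            have := blocks hβ hu hbt hune (by omega) hu hbz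
            omega
          have h2 : z' < t := blocks hβ hbt' hbt (Ne.symm hww') (le_of_lt hgt) hbz' hbt
          exact hIc z' hz'I z hzI t (hTn ht) (le_of_lt h2) h1
      refine ⟨{t | t ∈ T ∧ ∃ z w, z ∈ I ∧ β z = some w ∧ β t = some w},
        ?_, ?_, ?_, ?_, ?_⟩
      · rintro t ⟨ht, z, w, hzI, hbz, hbt⟩
        exact memI t ht z w hzI hbz hbt
      · rintro t ⟨ht, z, w, hzI, hbz, hbt⟩
        exact ⟨w, hbt⟩
      · rintro x ⟨hxT, zx, wx, hzxI, hbzx, hbx⟩ y ⟨hyT, zy, wy, hzyI, hbzy, hby⟩ z hz hxz hzy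
        have hzT : z ∈ T := hTc x hxT y hyT z hz hxz hzy
        have hzI : z ∈ I := hIc x (memI x hxT zx wx hzxI hbzx hbx) y
          (memI y hyT zy wy hzyI hbzy hby) z hz hxz hzy
        obtain ⟨u, hu⟩ : ∃ u, β z = some u := by
          cases h : β z with
          | none => exact absurd h (hT.1 _ hzT)
          | some u => exact ⟨u, rfl⟩
        exact ⟨hzT, z, u, hzI, hu, hu⟩
      · intro z w hzI hbz
        obtain ⟨t, ht, hbt⟩ := trans_exists hT hbz
        exact ⟨t, ⟨ht, z, w, hzI, hbz, hbt⟩, hbt⟩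
      · rintro t t' w ⟨htT, _⟩ ⟨ht'T, _⟩ hbt hbt'
        exact trans_uniq hT htT ht'T hbt hbt'
    · have same : ∀ z w z' w', z ∈ I → β z = some w → z' ∈ I → β z' = some w' →
          w = w' := by
        intro z w z' w' hz hbz hz' hbz'
        by_contra hne
        obtain ⟨t, ht, hbt⟩ := trans_exists hT hbz
        obtain ⟨t', ht', hbt'⟩ := trans_exists hT hbz'
        exact hcase ⟨t, t', w, w', ht, ht', hne, hbt, hbt', ⟨z, hz, hbz⟩, ⟨z', hz', hbz'⟩⟩
      by_cases hzex : ∃ z w, z ∈ I ∧ β z = some w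
      · obtain ⟨z₀, w₀, hz₀, hbz₀⟩ := hzex
        refine ⟨{z₀}, ?_, ?_, ?_, ?_, ?_⟩
        · rintro t rfl; exact hz₀
        · rintro t rfl; exact ⟨w₀, hbz₀⟩
        · intro x hx y hy z _ h1 h2
          simp only [Set.mem_singleton_iff] at hx hy ⊢
          omega
        · intro z w hzI hbz
          refine ⟨z₀, rfl, ?_⟩
          rw [hbz₀, same z₀ w₀ z w hz₀ hbz₀ hzI hbz]
        · rintro t t' w rfl rfl _ _; rfl
      · refine ⟨∅, ?_, ?_, ?_, ?_, ?_⟩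
        · rintro t ⟨⟩
        · rintro t ⟨⟩
        · rintro x ⟨⟩
        · intro z w hzI hbz
          exact absurd ⟨z, w, hzI, hbz⟩ hzex
        · rintro t t' w ⟨⟩
  obtain ⟨T₁, hT₁I, hT₁dom, hT₁c, hP2, hP3⟩ := key
  refine ⟨{u | u ∈ S ∧ ∃ t, α u = some t ∧ t ∈ T₁}, ⟨?_, ?_⟩, ?_⟩
  · rintro u ⟨huS, t, hau, htT₁⟩
    obtain ⟨w, hbt⟩ := hT₁dom t htT₁
    simp [pcomp, hau, hbt]
  · rintro w ⟨x, hx⟩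
    have hx' : ∃ v, α x = some v ∧ β v = some w := by
      simpa [pcomp, Option.bind_eq_some_iff] using hx
    obtain ⟨v, hax, hbv⟩ := hx'
    obtain ⟨t, htT₁, hbt⟩ := hP2 v w ⟨x, hax⟩ hbv
    obtain ⟨x', hax'⟩ := hT₁I t htT₁
    obtain ⟨u, huS, hau⟩ := trans_exists hS hax'
    refine ⟨u, ⟨⟨huS, t, hau, htT₁⟩, by simp [pcomp, hau, hbt]⟩, ?_⟩
    rintro u' ⟨⟨hu'S, t', hau', ht'T₁⟩, hcomp⟩
    have hbt' : β t' = some w := by simpa [pcomp, hau'] using hcomp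
    have htt : t' = t := hP3 t' t w ht'T₁ htT₁ hbt' hbt
    subst htt
    exact trans_uniq hS hu'S huS hau' hau
  · rintro x ⟨hxS, tx, haux, htxT₁⟩ y ⟨hyS, ty, hauy, htyT₁⟩ z hz hxz hzy
    have hzS : z ∈ S := hSc x hxS y hyS z hz hxz hzy
    obtain ⟨yz, hayz⟩ : ∃ yz, α z = some yz := by
      cases h : α z with
      | none => exact absurd h (hS.1 _ hzS)
      | some u => exact ⟨u, rfl⟩
    have hyzIcc : yz ∈ Set.Icc 1 n := (hα.1.1 z yz hayz).2
    have hyzT₁ : yz ∈ T₁ := by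
      rcases hα.2 with hp | hr
      · exact hT₁c tx htxT₁ ty htyT₁ yz hyzIcc
          (hp x z tx yz haux hayz hxz) (hp z y yz ty hayz hauy hzy)
      · exact hT₁c ty htyT₁ tx htxT₁ yz hyzIcc
          (hr z y yz ty hayz hauy hzy) (hr x z tx yz haux hayz hxz)
    exact ⟨hzS, yz, hayz, hyzT₁⟩
/-- Theorem 3.4 of the paper: the strongly regular elements of `ORCP n` form a
regular subsemigroup. -/
theorem sreg_is_regular_subsemigroup (n : ℕ) (hn : 0 < n) :
    (∀ α β : ℕ → Option ℕ, StronglyRegular n α → StronglyRegular n β →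
      StronglyRegular n (pcomp α β)) ∧
    (∀ α : ℕ → Option ℕ, StronglyRegular n α →
      ∃ β : ℕ → Option ℕ, StronglyRegular n β ∧ pcomp (pcomp α β) α = α) := by
  constructor
  · intro α β hsα hsβ
    obtain ⟨hα, -, S, hS, hSc⟩ := hsα
    obtain ⟨hβ, -, T, hT, hTc⟩ := hsβ
    obtain ⟨U, hU, hUc⟩ := comp_transversal hα hβ hS hSc hT hTc
    have hγ : ORCP n (pcomp α β) := orcp_comp hα hβ
    obtain ⟨hδ, heq⟩ := inverse_lemma hγ hU hUc
    exact ⟨hγ, ⟨pinv (pcomp α β) U, hδ.1, heq⟩, U, hU, hUc⟩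
  · intro α hsα
    obtain ⟨hα, -, U, hU, hUc⟩ := hsα
    obtain ⟨hδ, heq⟩ := inverse_lemma hα hU hUc
    exact ⟨pinv α U, hδ, heq⟩
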